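/- If the base-b expansion of n ends in exactly r ≥ 0 zeros, so n = m·b^r with b not dividing m, then the number of dismal divisors of n equals (r+1) times the number of dismal divisors of m. -/

import Mathlib

/-- The `i`-th base-`b` digit of `n`. -/
def digit (b n i : ℕ) : ℕ := n / b ^ i % b

/-- Dismal addition in base `b`: digitwise maximum of base-`b` digits. -/
def dadd (b m n : ℕ) : ℕ :=
  ∑ i ∈ Finset.range (m + n + 1), max (digit b m i) (digit b n i) * b ^ i

/-- Dismal multiplication in base `b`: digit convolution with `min` as digit
product and `max` as digit sum (no carries). -/
def dmul (b m n : ℕ) : ℕ :=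
  ∑ k ∈ Finset.range (m + n + 1),
    ((Finset.range (k + 1)).sup fun i => min (digit b m i) (digit b n (k - i))) * b ^ k

/-- The number of base-`b` digits of `n`. -/
def dlen (b n : ℕ) : ℕ := (Nat.digits b n).length

/-- `p` dismally divides `n` in base `b`. -/
def DDvd (b p n : ℕ) : Prop := ∃ q, dmul b p q = n

open scoped Classical in
/-- The finite set of dismal divisors of `n` (every dismal divisor of a
nonzero `n` has at most `dlen b n` digits). -/
noncomputable def ddivisors (b n : ℕ) : Finset ℕ :=
  (Finset.range (b ^ dlen b n)).filter fun p => DDvd b p n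

/-- The dismal sum of a finite set of numbers: digitwise supremum. -/
def ddigitSum (b : ℕ) (S : Finset ℕ) : ℕ :=
  ∑ i ∈ Finset.range (S.sup id + 1), (S.sup fun p => digit b p i) * b ^ i

/-- The number of dismal divisors of `n` in base `b`. -/
noncomputable def dnum (b n : ℕ) : ℕ := (ddivisors b n).card

/-! ### Auxiliary machinery -/

/-- The digit convolution. -/
def conv (b p q k : ℕ) : ℕ :=
  (Finset.range (k + 1)).sup fun i => min (digit b p i) (digit b q (k - i))

lemma dmul_eq (b p q : ℕ) :
    dmul b p q = ∑ k ∈ Finset.range (p + q + 1), conv b p q k * b ^ k := rfl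

section
variable {b : ℕ}

lemma digit_lt (hb : 2 ≤ b) (n i : ℕ) : digit b n i < b := Nat.mod_lt _ (by omega)

lemma digit_eq_zero_of_lt {n i : ℕ} (h : n < b ^ i) : digit b n i = 0 := by
  simp [digit, Nat.div_eq_of_lt h]

lemma pow_le_of_digit_ne_zero {n i : ℕ} (h : digit b n i ≠ 0) : b ^ i ≤ n := by
  by_contra hc
  exact h (digit_eq_zero_of_lt (by omega))

lemma lt_of_digit_ne_zero (hb : 2 ≤ b) {n i : ℕ} (h : digit b n i ≠ 0) : i < n := by
  have h1 := pow_le_of_digit_ne_zero h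
  have h2 : i < 2 ^ i := Nat.lt_two_pow_self
  have h3 : 2 ^ i ≤ b ^ i := Nat.pow_le_pow_left hb i
  omega

lemma digit_zero (i : ℕ) : digit b 0 i = 0 := by simp [digit]

lemma digit_zero' (n : ℕ) : digit b n 0 = n % b := by simp [digit]

lemma sum_digits_lt (hb : 2 ≤ b) (f : ℕ → ℕ) (N : ℕ) (hf : ∀ i, f i < b) :
    ∑ i ∈ Finset.range N, f i * b ^ i < b ^ N := by
  induction N with
  | zero => simp
  | succ N ih =>
    rw [Finset.sum_range_succ]
    calc ∑ i ∈ Finset.range N, f i * b ^ i + f N * b ^ N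
        < b ^ N + f N * b ^ N := by omega
      _ = (f N + 1) * b ^ N := by ring
      _ ≤ b * b ^ N := Nat.mul_le_mul_right _ (hf N)
      _ = b ^ (N + 1) := by rw [pow_succ]; ring

lemma digit_sum (hb : 2 ≤ b) (f : ℕ → ℕ) (N : ℕ) (hf : ∀ i, f i < b) (k : ℕ) :
    digit b (∑ i ∈ Finset.range N, f i * b ^ i) k = if k < N then f k else 0 := by
  have hbpos : 0 < b := by omega
  split_ifs with h
  · obtain ⟨c, rfl⟩ : ∃ c, N = k + (c + 1) := ⟨N - k - 1, by omega⟩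
    rw [Finset.sum_range_add]
    have hlow : ∑ i ∈ Finset.range k, f i * b ^ i < b ^ k := sum_digits_lt hb f k hf
    have hhigh : ∑ i ∈ Finset.range (c + 1), f (k + i) * b ^ (k + i)
        = b ^ k * ∑ i ∈ Finset.range (c + 1), f (k + i) * b ^ i := by
      rw [Finset.mul_sum]
      refine Finset.sum_congr rfl fun i _ => ?_
      rw [pow_add]; ring
    rw [hhigh, digit, Nat.add_mul_div_left _ _ (Nat.pow_pos hbpos),
      Nat.div_eq_of_lt hlow, zero_add]
    rw [Finset.sum_range_succ']
    have : ∑ i ∈ Finset.range c, f (k + (i + 1)) * b ^ (i + 1) + f (k + 0) * b ^ 0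
        = f k + b * ∑ i ∈ Finset.range c, f (k + (i + 1)) * b ^ i := by
      rw [Finset.mul_sum]
      simp only [pow_zero, mul_one, add_zero]
      rw [add_comm]
      congr 1
      refine Finset.sum_congr rfl fun i _ => ?_
      rw [pow_succ]; ring
    rw [this, Nat.add_mul_mod_self_left, Nat.mod_eq_of_lt (hf k)]
  · exact digit_eq_zero_of_lt (lt_of_lt_of_le (sum_digits_lt hb f N hf)
      (Nat.pow_le_pow_right hbpos (by omega)))

lemma conv_lt (hb : 2 ≤ b) (p q k : ℕ) : conv b p q k < b := by
  rw [conv, Finset.sup_lt_iff (show (0:ℕ) < b by omega)]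
  intro i _
  exact lt_of_le_of_lt (min_le_left _ _) (digit_lt hb p i)

lemma conv_eq_zero (hb : 2 ≤ b) {p q k : ℕ} (h : p + q ≤ k) : conv b p q k = 0 := by
  refine Nat.eq_zero_of_le_zero (Finset.sup_le fun i hi => ?_)
  rw [Finset.mem_range] at hi
  rcases Nat.eq_zero_or_pos (min (digit b p i) (digit b q (k - i))) with h0 | h0
  · omega
  · have h1 : digit b p i ≠ 0 := by omega
    have h2 : digit b q (k - i) ≠ 0 := by omega
    have := lt_of_digit_ne_zero hb h1
    have := lt_of_digit_ne_zero hb h2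
    omega

lemma digit_dmul (hb : 2 ≤ b) (p q k : ℕ) : digit b (dmul b p q) k = conv b p q k := by
  rw [dmul_eq, digit_sum hb _ _ (fun i => conv_lt hb p q i)]
  split_ifs with h
  · rfl
  · exact (conv_eq_zero hb (by omega)).symm

lemma sum_digit_mod_pow (x N : ℕ) : x % b ^ N = ∑ k ∈ Finset.range N, digit b x k * b ^ k := by
  induction N with
  | zero => simp [Nat.mod_one]
  | succ N ih =>
    rw [Nat.mod_pow_succ, Finset.sum_range_succ, ih, digit, mul_comm]

lemma digit_ext (hb : 2 ≤ b) {x y : ℕ} (h : ∀ k, digit b x k = digit b y k) : x = y := by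
  set N := max x y + 1 with hN
  have key : ∀ z : ℕ, z ≤ max x y → z < b ^ N := by
    intro z hz
    have h1 : z < 2 ^ z := Nat.lt_two_pow_self
    have h2 : (2:ℕ) ^ z ≤ 2 ^ N := Nat.pow_le_pow_right (by norm_num) (by omega)
    have h3 : (2:ℕ) ^ N ≤ b ^ N := Nat.pow_le_pow_left hb N
    omega
  have hx : x < b ^ N := key x (le_max_left _ _)
  have hy : y < b ^ N := key y (le_max_right _ _)
  calc x = x % b ^ N := (Nat.mod_eq_of_lt hx).symm
    _ = ∑ k ∈ Finset.range N, digit b x k * b ^ k := sum_digit_mod_pow x N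
    _ = ∑ k ∈ Finset.range N, digit b y k * b ^ k := by
        refine Finset.sum_congr rfl fun k _ => by rw [h k]
    _ = y % b ^ N := (sum_digit_mod_pow y N).symm
    _ = y := Nat.mod_eq_of_lt hy

lemma digit_mul_pow (hb : 2 ≤ b) (x s k : ℕ) :
    digit b (x * b ^ s) k = if k < s then 0 else digit b x (k - s) := by
  have hbpos : 0 < b := by omega
  split_ifs with h
  · have he : x * b ^ s = x * b ^ (s - k) * b ^ k := by
      rw [mul_assoc, ← pow_add]
      congr 2
      omega
    rw [digit, he, Nat.mul_div_cancel _ (Nat.pow_pos hbpos)]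
    have hd : b ∣ x * b ^ (s - k) := Dvd.dvd.mul_left (dvd_pow_self b (by omega)) x
    exact Nat.mod_eq_zero_of_dvd hd
  · have he : x * b ^ s / b ^ k = x / b ^ (k - s) := by
      rw [show b ^ k = b ^ (k - s) * b ^ s by rw [← pow_add]; congr 1; omega]
      exact Nat.mul_div_mul_right x _ (Nat.pow_pos hbpos) -- check name
    rw [digit, he, digit]

lemma conv_shift (hb : 2 ≤ b) (p q s t k : ℕ) :
    conv b (p * b ^ s) (q * b ^ t) k =
      if k < s + t then 0 else conv b p q (k - (s + t)) := by
  split_ifs with h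
  · refine Nat.eq_zero_of_le_zero (Finset.sup_le fun i hi => ?_)
    rw [Finset.mem_range] at hi
    rw [digit_mul_pow hb, digit_mul_pow hb]
    split_ifs with h1 h2
    · simp
    · simp
    · simp
    · omega
  · refine le_antisymm (Finset.sup_le fun i hi => ?_) (Finset.sup_le fun j hj => ?_)
    · rw [Finset.mem_range] at hi
      rw [digit_mul_pow hb, digit_mul_pow hb]
      split_ifs with h1 h2
      · simp
      · simp
      · simp
      · have hmem : i - s ∈ Finset.range (k - (s + t) + 1) := by
          rw [Finset.mem_range]; omega
        refine le_trans ?_ (Finset.le_sup (f := fun j =>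
          min (digit b p j) (digit b q (k - (s + t) - j))) hmem)
        have : k - (s + t) - (i - s) = k - i - t := by omega
        rw [this]
    · rw [Finset.mem_range] at hj
      have hmem : j + s ∈ Finset.range (k + 1) := by rw [Finset.mem_range]; omega
      refine le_trans ?_ (Finset.le_sup (f := fun i =>
        min (digit b (p * b ^ s) i) (digit b (q * b ^ t) (k - i))) hmem)
      rw [digit_mul_pow hb, digit_mul_pow hb, if_neg (by omega), if_neg (by omega)]
      have e1 : j + s - s = j := by omega
      have e2 : k - (j + s) - t = k - (s + t) - j := by omega
      rw [e1, e2]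

lemma dmul_mul_pow (hb : 2 ≤ b) (p q s t : ℕ) :
    dmul b (p * b ^ s) (q * b ^ t) = dmul b p q * b ^ (s + t) := by
  refine digit_ext hb fun k => ?_
  rw [digit_dmul hb, conv_shift hb, digit_mul_pow hb]
  split_ifs with h
  · rfl
  · rw [digit_dmul hb]

lemma dmul_zero (hb : 2 ≤ b) (p : ℕ) : dmul b p 0 = 0 := by
  rw [dmul_eq]
  refine Finset.sum_eq_zero fun k _ => ?_
  have : conv b p 0 k = 0 := by
    refine Nat.eq_zero_of_le_zero (Finset.sup_le fun i _ => ?_)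
    rw [digit_zero]
    simp
  rw [this, zero_mul]

lemma zero_dmul (hb : 2 ≤ b) (q : ℕ) : dmul b 0 q = 0 := by
  rw [dmul_eq]
  refine Finset.sum_eq_zero fun k _ => ?_
  have : conv b 0 q k = 0 := by
    refine Nat.eq_zero_of_le_zero (Finset.sup_le fun i _ => ?_)
    rw [digit_zero]
    simp
  rw [this, zero_mul]

lemma digit_log_ne_zero (hb : 2 ≤ b) {p : ℕ} (hp : p ≠ 0) :
    digit b p (Nat.log b p) ≠ 0 := by
  have h1 : b ^ Nat.log b p ≤ p := Nat.pow_log_le_self b hp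
  have h2 : p < b ^ (Nat.log b p + 1) := Nat.lt_pow_succ_log_self (by omega) p
  rw [pow_succ] at h2
  have hbpos : 0 < b ^ Nat.log b p := Nat.pow_pos (by omega)
  have hlo : 1 ≤ p / b ^ Nat.log b p := (Nat.one_le_div_iff hbpos).mpr h1
  have hhi : p / b ^ Nat.log b p < b := Nat.div_lt_of_lt_mul (by omega)
  rw [digit, Nat.mod_eq_of_lt hhi]
  omega

lemma conv_log_ne_zero (hb : 2 ≤ b) {p q : ℕ} (hp : p ≠ 0) (hq : q ≠ 0) :
    conv b p q (Nat.log b p + Nat.log b q) ≠ 0 := by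
  have hmem : Nat.log b p ∈ Finset.range (Nat.log b p + Nat.log b q + 1) := by
    rw [Finset.mem_range]; omega
  have hle := Finset.le_sup (f := fun i =>
    min (digit b p i) (digit b q (Nat.log b p + Nat.log b q - i))) hmem
  have e : Nat.log b p + Nat.log b q - Nat.log b p = Nat.log b q := by omega
  rw [e] at hle
  have h1 := digit_log_ne_zero hb hp
  have h2 := digit_log_ne_zero hb hq
  rw [conv]
  omega

lemma dmul_ne_zero (hb : 2 ≤ b) {p q : ℕ} (hp : p ≠ 0) (hq : q ≠ 0) :
    dmul b p q ≠ 0 := by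
  intro h0
  have := digit_dmul hb p q (Nat.log b p + Nat.log b q)
  rw [h0, digit_zero] at this
  exact conv_log_ne_zero hb hp hq this.symm

lemma ddvd_lt (hb : 2 ≤ b) {p n : ℕ} (hn : n ≠ 0) (h : DDvd b p n) :
    p < b ^ dlen b n := by
  obtain ⟨q, hq⟩ := h
  have hp : p ≠ 0 := by rintro rfl; rw [zero_dmul hb] at hq; exact hn hq.symm
  have hq0 : q ≠ 0 := by rintro rfl; rw [dmul_zero hb] at hq; exact hn hq.symm
  have hd : digit b n (Nat.log b p + Nat.log b q) ≠ 0 := by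
    rw [← hq, digit_dmul hb]
    exact conv_log_ne_zero hb hp hq0
  have hle : b ^ (Nat.log b p + Nat.log b q) ≤ n := pow_le_of_digit_ne_zero hd
  have hlog : Nat.log b p + Nat.log b q ≤ Nat.log b n :=
    (Nat.le_log_iff_pow_le (by omega) hn).mpr hle
  have hlt : p < b ^ (Nat.log b p + 1) := Nat.lt_pow_succ_log_self (by omega) p
  have hdl : dlen b n = Nat.log b n + 1 := Nat.digits_len b n (by omega) hn
  rw [hdl]
  exact lt_of_lt_of_le hlt (Nat.pow_le_pow_right (by omega) (by omega))

open scoped Classical in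
lemma mem_ddivisors (hb : 2 ≤ b) {p n : ℕ} (hn : n ≠ 0) :
    p ∈ ddivisors b n ↔ DDvd b p n := by
  rw [ddivisors, Finset.mem_filter, Finset.mem_range]
  exact ⟨fun h => h.2, fun h => ⟨ddvd_lt hb hn h, h⟩⟩

lemma exists_pow_factor (hb : 2 ≤ b) {p : ℕ} (hp : p ≠ 0) :
    ∃ d s, ¬ b ∣ d ∧ p = d * b ^ s := by
  induction p using Nat.strong_induction_on with
  | _ p ih =>
    by_cases h : b ∣ p
    · obtain ⟨c, rfl⟩ := h
      have hc : c ≠ 0 := by rintro rfl; simp at hp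
      have hlt : c < b * c := by
        have : 1 * c < b * c := by
          apply Nat.mul_lt_mul_of_lt_of_le (by omega) (le_refl c) (by omega)
        omega
      obtain ⟨d, s, hd, rfl⟩ := ih c hlt hc
      exact ⟨d, s + 1, hd, by rw [pow_succ]; ring⟩
    · exact ⟨p, 0, h, by simp⟩

lemma pow_factor_le {d d' s s' : ℕ} (hb : 2 ≤ b) (hd : ¬ b ∣ d) (hd' : ¬ b ∣ d')
    (h : d * b ^ s = d' * b ^ s') (hss : s ≤ s') : d = d' ∧ s = s' := by
  have hbpos : 0 < b ^ s := Nat.pow_pos (by omega)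
  have he : d' * b ^ s' = d' * b ^ (s' - s) * b ^ s := by
    rw [mul_assoc, ← pow_add]
    congr 2
    omega
  rw [he] at h
  have hd2 : d = d' * b ^ (s' - s) := Nat.eq_of_mul_eq_mul_right hbpos h
  rcases Nat.eq_zero_or_pos (s' - s) with h0 | h0
  · constructor
    · rw [hd2, h0, pow_zero, mul_one]
    · omega
  · exfalso
    apply hd
    rw [hd2]
    exact Dvd.dvd.mul_left (dvd_pow_self b (by omega)) d'

lemma pow_factor_unique {d d' s s' : ℕ} (hb : 2 ≤ b) (hd : ¬ b ∣ d) (hd' : ¬ b ∣ d')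
    (h : d * b ^ s = d' * b ^ s') : d = d' ∧ s = s' := by
  rcases le_total s s' with hss | hss
  · exact pow_factor_le hb hd hd' h hss
  · obtain ⟨h1, h2⟩ := pow_factor_le hb hd' hd h.symm hss
    exact ⟨h1.symm, h2.symm⟩

lemma not_dvd_dmul (hb : 2 ≤ b) {d e : ℕ} (hd : ¬ b ∣ d) (he : ¬ b ∣ e) :
    ¬ b ∣ dmul b d e := by
  have h0 : digit b (dmul b d e) 0 = min (d % b) (e % b) := by
    rw [digit_dmul hb, conv]
    simp [digit_zero']
  have hd0 : d % b ≠ 0 := fun h => hd (Nat.dvd_of_mod_eq_zero h)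
  have he0 : e % b ≠ 0 := fun h => he (Nat.dvd_of_mod_eq_zero h)
  intro hdvd
  have : dmul b d e % b = 0 := Nat.mod_eq_zero_of_dvd hdvd
  rw [digit_zero'] at h0
  omega

/-- Structure of a dismal factorization of a nonzero number. -/
lemma dmul_factor_structure (hb : 2 ≤ b) {p q n : ℕ} (h : dmul b p q = n) (hn : n ≠ 0) :
    ∃ d e s t, ¬ b ∣ d ∧ ¬ b ∣ e ∧ p = d * b ^ s ∧ q = e * b ^ t ∧
      dmul b d e * b ^ (s + t) = n ∧ ¬ b ∣ dmul b d e := by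
  have hp : p ≠ 0 := by rintro rfl; rw [zero_dmul hb] at h; exact hn h.symm
  have hq : q ≠ 0 := by rintro rfl; rw [dmul_zero hb] at h; exact hn h.symm
  obtain ⟨d, s, hd, rfl⟩ := exists_pow_factor hb hp
  obtain ⟨e, t, he, rfl⟩ := exists_pow_factor hb hq
  refine ⟨d, e, s, t, hd, he, rfl, rfl, ?_, not_dvd_dmul hb hd he⟩
  rw [← dmul_mul_pow hb]
  exact h

lemma dlen_mul_pow (hb : 2 ≤ b) {m : ℕ} (hm : m ≠ 0) (r : ℕ) :
    dlen b (m * b ^ r) = dlen b m + r := by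
  induction r with
  | zero => simp
  | succ r ih =>
    have hne : m * b ^ r ≠ 0 := by positivity
    have hne' : m * b ^ (r + 1) ≠ 0 := by positivity
    rw [dlen, Nat.digits_len b _ (by omega) hne',
      show m * b ^ (r + 1) = m * b ^ r * b by rw [pow_succ]; ring,
      Nat.log_mul_base (by omega) hne]
    rw [dlen, Nat.digits_len b _ (by omega) hne] at ih
    omega

end

/-- trailing zeros multiply the number of dismal divisors. -/
theorem dismal_divisors_trailing_zeros (b : ℕ) (hb : 2 ≤ b) (m r : ℕ)
    (hm : ¬ b ∣ m) : dnum b (m * b ^ r) = (r + 1) * dnum b m := by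
  classical
  have hm0 : m ≠ 0 := by rintro rfl; exact hm (dvd_zero b)
  have hb0 : 0 < b := by omega
  have hn0 : m * b ^ r ≠ 0 := by positivity
  have hDnotdvd : ∀ d ∈ ddivisors b m, ¬ b ∣ d := by
    intro d hd
    rw [mem_ddivisors hb hm0] at hd
    obtain ⟨q, hq⟩ := hd
    obtain ⟨d', e, s, t, hd', he, rfl, rfl, hmul, hnd⟩ := dmul_factor_structure hb hq hm0
    have hst : s + t = 0 := by
      by_contra hs
      exact hm (hmul ▸ dvd_mul_of_dvd_right (dvd_pow_self b (by omega)) _)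
    have hs0 : s = 0 := by omega
    rw [hs0, pow_zero, mul_one]
    exact hd'
  have hcard : (Finset.range (r + 1) ×ˢ ddivisors b m).card
      = (ddivisors b (m * b ^ r)).card := by
    apply Finset.card_bij (fun x _ => x.2 * b ^ x.1)
    · rintro ⟨s, d⟩ hx
      rw [Finset.mem_product, Finset.mem_range] at hx
      obtain ⟨hs, hd⟩ := hx
      rw [mem_ddivisors hb hm0] at hd
      obtain ⟨q, hq⟩ := hd
      rw [mem_ddivisors hb hn0]
      refine ⟨q * b ^ (r - s), ?_⟩
      show dmul b (d * b ^ s) (q * b ^ (r - s)) = m * b ^ r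
      rw [dmul_mul_pow hb, hq, show s + (r - s) = r by omega]
    · rintro ⟨s, d⟩ hx ⟨s', d'⟩ hx' heq
      rw [Finset.mem_product] at hx hx'
      have h1 := hDnotdvd _ hx.2
      have h2 := hDnotdvd _ hx'.2
      obtain ⟨he1, he2⟩ := pow_factor_unique hb h1 h2 heq
      simp only [Prod.mk.injEq]
      exact ⟨he2, he1⟩
    · intro p hp
      rw [mem_ddivisors hb hn0] at hp
      obtain ⟨q, hq⟩ := hp
      obtain ⟨d, e, s, t, hd, he, rfl, rfl, hmul, hnd⟩ := dmul_factor_structure hb hq hn0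
      obtain ⟨hde, hst⟩ := pow_factor_unique hb hnd hm hmul
      refine ⟨⟨s, d⟩, ?_, rfl⟩
      rw [Finset.mem_product, Finset.mem_range]
      refine ⟨by omega, ?_⟩
      rw [mem_ddivisors hb hm0]
      exact ⟨e, hde⟩
  rw [dnum, dnum, ← hcard, Finset.card_product, Finset.card_range]
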